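/- arXiv:2204.05812 — 6 statements merged into one kernel-verified Lean document; each statement's English description precedes it below -/
import Mathlib

section
/- The closest Toeplitz matrix (in the Frobenius norm) to a symmetric positive definite matrix need not be positive semidefinite. Concretely, for A = [[100, 99, 0], [99, 100, 1/2], [0, 1/2, 1]], A is symmetric positive definite, but the Toeplitz matrix T = [[67, 49.75, 0], [49.75, 67, 49.75], [0, 49.75, 67]] obtained by diagonal averaging of A is indefinite (it has a negative eigenvalue). -/
open Matrix Real Finset

/-- Squared Frobenius norm of a real square matrix. -/
def frobSq {n : ℕ} (A : Matrix (Fin n) (Fin n) ℝ) : ℝ := ∑ i, ∑ j, (A i j)^2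

/-- A matrix is Toeplitz if its entries are constant along diagonals. -/
def IsToeplitz {n : ℕ} (A : Matrix (Fin n) (Fin n) ℝ) : Prop :=
  ∀ i j i' j' : Fin n, (i : ℤ) - (j : ℤ) = (i' : ℤ) - (j' : ℤ) → A i j = A i' j'

/-- The (2k+1)-banded Toeplitz matrix (n;k;σ,δ,τ): subdiagonals σ₁,…,σ_k,
diagonal δ, superdiagonals τ₁,…,τ_k. -/
def bandedToeplitz (n k : ℕ) (σ τ : ℕ → ℝ) (δ : ℝ) : Matrix (Fin n) (Fin n) ℝ :=
  Matrix.of fun i j =>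
    if (i : ℕ) = (j : ℕ) then δ
    else if (j : ℕ) < (i : ℕ) ∧ (i : ℕ) - (j : ℕ) ≤ k then σ ((i : ℕ) - (j : ℕ))
    else if (i : ℕ) < (j : ℕ) ∧ (j : ℕ) - (i : ℕ) ≤ k then τ ((j : ℕ) - (i : ℕ))
    else 0

/-- The tridiagonal Toeplitz matrix (n;1;σ₁,δ,τ₁). -/
def triToeplitz (n : ℕ) (σ₁ δ τ₁ : ℝ) : Matrix (Fin n) (Fin n) ℝ :=
  bandedToeplitz n 1 (fun _ => σ₁) (fun _ => τ₁) δ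

/-- Diagonal averaging of a matrix. -/
noncomputable def diagAvg {n : ℕ} (A : Matrix (Fin n) (Fin n) ℝ) : Matrix (Fin n) (Fin n) ℝ :=
  Matrix.of fun i j =>
    (∑ p : Fin n × Fin n, if (p.1 : ℤ) - (p.2 : ℤ) = (i : ℤ) - (j : ℤ) then A p.1 p.2 else 0) /
    (∑ p : Fin n × Fin n, if (p.1 : ℤ) - (p.2 : ℤ) = (i : ℤ) - (j : ℤ) then (1 : ℝ) else 0)


lemma trace_eq_sum_eig' {n : Type*} [Fintype n] [DecidableEq n] {A : Matrix n n ℝ}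
    (hA : A.IsHermitian) : A.trace = ∑ i, hA.eigenvalues i := by
  simpa using hA.trace_eq_sum_eigenvalues

/-- the closest Toeplitz matrix to a symmetric positive definite matrix
need not be positive semidefinite. -/
theorem diag_average_of_posdef_can_be_indefinite :
    (!![100, 99, 0; 99, 100, 1/2; 0, 1/2, 1] : Matrix (Fin 3) (Fin 3) ℝ).PosDef ∧
    diagAvg (!![100, 99, 0; 99, 100, 1/2; 0, 1/2, 1] : Matrix (Fin 3) (Fin 3) ℝ) =
      (!![67, 49.75, 0; 49.75, 67, 49.75; 0, 49.75, 67] : Matrix (Fin 3) (Fin 3) ℝ) ∧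
    ∃ hT : (!![67, 49.75, 0; 49.75, 67, 49.75; 0, 49.75, 67] :
        Matrix (Fin 3) (Fin 3) ℝ).IsHermitian,
      (∃ i, hT.eigenvalues i < 0) ∧ (∃ j, 0 < hT.eigenvalues j) := by
  refine ⟨?_, ?_, ?_⟩
  · rw [Matrix.posDef_iff_dotProduct_mulVec]
    constructor
    · ext i j
      fin_cases i <;> fin_cases j <;>
        simp [Matrix.conjTranspose, Matrix.transpose, Matrix.vecHead, Matrix.vecTail]
    · intro x hx
      have h : x 0 ≠ 0 ∨ x 1 ≠ 0 ∨ x 2 ≠ 0 := by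
        by_contra h; push_neg at h
        exact hx (funext fun i => by fin_cases i <;> simp [h.1, h.2.1, h.2.2])
      simp only [dotProduct, Matrix.mulVec, Fin.sum_univ_three, RCLike.re_to_real,
        Matrix.cons_val', Matrix.cons_val_zero, Matrix.cons_val_one, Matrix.head_cons,
        Matrix.empty_val', Matrix.cons_val_fin_one, Matrix.head_fin_const, Pi.star_apply,
        star_trivial]
      norm_num [Matrix.cons_val_two, Matrix.vecHead, Matrix.vecTail]
      rcases h with h | h | h <;>
        nlinarith [sq_nonneg (10 * x 0 + (99/10) * x 1), sq_nonneg (x 2 + x 1 / 2),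
          sq_nonneg (x 0), sq_nonneg (x 1), sq_nonneg (x 2), pow_pos (abs_pos.2 h) 2,
          sq_abs (x 0), sq_abs (x 1), sq_abs (x 2)]
  · have c0 : #(filter (fun x : Fin 3 × Fin 3 => ((x.1 : ℕ) : ℤ) - ((x.2 : ℕ) : ℤ) = 0) univ)
        = 3 := by decide
    have c1 : #(filter (fun x : Fin 3 × Fin 3 => ((x.1 : ℕ) : ℤ) - ((x.2 : ℕ) : ℤ) = 1) univ)
        = 2 := by decide
    have c2 : #(filter (fun x : Fin 3 × Fin 3 => ((x.1 : ℕ) : ℤ) - ((x.2 : ℕ) : ℤ) = -1) univ)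
        = 2 := by decide
    ext i j
    fin_cases i <;> fin_cases j <;>
      simp [diagAvg, Fintype.sum_prod_type, Fin.sum_univ_three] <;>
      norm_num [c0, c1, c2]
  · have hT : (!![67, 49.75, 0; 49.75, 67, 49.75; 0, 49.75, 67] :
        Matrix (Fin 3) (Fin 3) ℝ).IsHermitian := by
      ext i j
      fin_cases i <;> fin_cases j <;>
        simp [Matrix.conjTranspose, Matrix.transpose, Matrix.vecHead, Matrix.vecTail]
    refine ⟨hT, ?_, ?_⟩
    · by_contra h
      push_neg at h
      have hdet : (!![67, 49.75, 0; 49.75, 67, 49.75; 0, 49.75, 67] :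
          Matrix (Fin 3) (Fin 3) ℝ).det = ∏ i, hT.eigenvalues i := by
        rw [hT.det_eq_prod_eigenvalues]; norm_num
      have h1 : (0:ℝ) ≤ ∏ i, hT.eigenvalues i := Finset.prod_nonneg fun i _ => h i
      rw [Matrix.det_fin_three] at hdet
      norm_num [Matrix.cons_val_two, Matrix.vecHead, Matrix.vecTail] at hdet
      linarith
    · by_contra h
      push_neg at h
      have htr := trace_eq_sum_eig' hT
      have h1 : ∑ i, hT.eigenvalues i ≤ 0 := Finset.sum_nonpos fun i _ => h i
      rw [Matrix.trace_fin_three] at htr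
      norm_num [Matrix.cons_val_two, Matrix.vecHead, Matrix.vecTail] at htr
      linarith
end

section
/- For any real n×n matrix A with symmetric part B = (A + Aᵀ)/2 and skew-symmetric part C = (A − Aᵀ)/2, the squared Frobenius distance from A to the set of symmetric positive semidefinite matrices equals Σ_{λ_i(B) < 0} λ_i(B)² + ‖C‖_F², where λ_i(B) are the eigenvalues of B. -/
open Matrix Real Finset

section Aux

variable {n : ℕ}

lemma frobSq_eq_trace (M : Matrix (Fin n) (Fin n) ℝ) : frobSq M = (Mᵀ * M).trace := by
  simp only [frobSq, Matrix.trace, Matrix.diag, Matrix.mul_apply, Matrix.transpose_apply, pow_two]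
  exact Finset.sum_comm

lemma frobSq_conj {U : Matrix (Fin n) (Fin n) ℝ} (h1 : U * Uᵀ = 1) (h2 : Uᵀ * U = 1)
    (X : Matrix (Fin n) (Fin n) ℝ) : frobSq (Uᵀ * X * U) = frobSq X := by
  rw [frobSq_eq_trace, frobSq_eq_trace]
  have ht : (Uᵀ * X * U)ᵀ = Uᵀ * Xᵀ * U := by
    simp [Matrix.transpose_mul, Matrix.mul_assoc]
  rw [ht]
  have key : Uᵀ * Xᵀ * U * (Uᵀ * X * U) = Uᵀ * (Xᵀ * X) * U := by
    calc Uᵀ * Xᵀ * U * (Uᵀ * X * U) = Uᵀ * Xᵀ * (U * Uᵀ) * (X * U) := by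
          simp only [Matrix.mul_assoc]
      _ = Uᵀ * (Xᵀ * X) * U := by rw [h1]; simp only [Matrix.mul_one, Matrix.mul_assoc]
  rw [key, Matrix.trace_mul_comm, ← Matrix.mul_assoc, ← Matrix.mul_assoc, h1, Matrix.one_mul]

lemma sum_mul_symm_skew {X Y : Matrix (Fin n) (Fin n) ℝ} (hX : Xᵀ = X) (hY : Yᵀ = -Y) :
    ∑ i, ∑ j, X i j * Y i j = 0 := by
  have key : ∑ i, ∑ j, X i j * Y i j = ∑ i, ∑ j, -(X i j * Y i j) := by
    rw [Finset.sum_comm]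
    refine Finset.sum_congr rfl fun i _ => Finset.sum_congr rfl fun j _ => ?_
    have h1 : X j i = X i j := congrFun (congrFun hX i) j
    have h2 : Y j i = -(Y i j) := by
      have := congrFun (congrFun hY i) j
      simpa using this
    rw [h1, h2]; ring
  have h2 : (2:ℝ) * ∑ i, ∑ j, X i j * Y i j = 0 := by
    simp only [Finset.sum_neg_distrib] at key; linarith
  linarith

lemma frobSq_add_symm_skew {X Y : Matrix (Fin n) (Fin n) ℝ} (hX : Xᵀ = X) (hY : Yᵀ = -Y) :
    frobSq (X + Y) = frobSq X + frobSq Y := by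
  have h0 := sum_mul_symm_skew hX hY
  simp only [frobSq, Matrix.add_apply]
  have key : ∀ i : Fin n, ∑ j, (X i j + Y i j)^2
      = (∑ j, (X i j)^2) + (∑ j, (Y i j)^2) + 2 * ∑ j, X i j * Y i j := by
    intro i
    rw [Finset.mul_sum, ← Finset.sum_add_distrib, ← Finset.sum_add_distrib]
    exact Finset.sum_congr rfl fun j _ => by ring
  simp_rw [key]
  rw [Finset.sum_add_distrib, Finset.sum_add_distrib, ← Finset.mul_sum, h0]
  ring

lemma posSemidef_diag_nn {M : Matrix (Fin n) (Fin n) ℝ} (hM : M.PosSemidef) (i : Fin n) :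
    0 ≤ M i i := by
  exact hM.diag_nonneg

lemma frobSq_diagonal (d : Fin n → ℝ) : frobSq (diagonal d) = ∑ i, (d i)^2 := by
  simp only [frobSq, diagonal_apply]
  refine Finset.sum_congr rfl fun i _ => ?_
  rw [Finset.sum_eq_single i]
  · simp
  · intro j _ hj; simp [Ne.symm hj]
  · simp

end Aux

/-- the squared Frobenius distance from `A` to the set of symmetric
positive semidefinite matrices equals the sum of the squares of the negative
eigenvalues of the symmetric part plus the squared Frobenius norm of the
skew-symmetric part. -/
theorem sq_dist_to_psd {n : ℕ} (A : Matrix (Fin n) (Fin n) ℝ)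
    (hB : (((1:ℝ)/2) • (A + Aᵀ)).IsHermitian) :
    sInf {d : ℝ | ∃ E : Matrix (Fin n) (Fin n) ℝ, (A + E).PosSemidef ∧ d = frobSq E} =
      (∑ i, if hB.eigenvalues i < 0 then (hB.eigenvalues i)^2 else 0) +
        frobSq (((1:ℝ)/2) • (A - Aᵀ)) := by
  classical
  set B : Matrix (Fin n) (Fin n) ℝ := ((1:ℝ)/2) • (A + Aᵀ) with hBdef
  set C : Matrix (Fin n) (Fin n) ℝ := ((1:ℝ)/2) • (A - Aᵀ) with hCdef
  have hBsymm : Bᵀ = B := by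
    ext i j; simp [hBdef, Matrix.transpose_apply]; ring
  have hCskew : Cᵀ = -C := by
    ext i j; simp [hCdef, Matrix.transpose_apply]; ring
  have hABC : A = B + C := by
    ext i j; simp [hBdef, hCdef]; ring
  set U : Matrix (Fin n) (Fin n) ℝ := (hB.eigenvectorUnitary : Matrix (Fin n) (Fin n) ℝ)
    with hUdef
  set ev : Fin n → ℝ := hB.eigenvalues with hev
  have hUstar : Uᵀ = star U := by
    ext i j; simp [Matrix.conjTranspose_apply]
  have hU1 : U * Uᵀ = 1 := by
    rw [hUstar]; exact (Matrix.mem_unitaryGroup_iff).mp hB.eigenvectorUnitary.2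
  have hU2 : Uᵀ * U = 1 := by
    rw [hUstar]; exact (Matrix.mem_unitaryGroup_iff').mp hB.eigenvectorUnitary.2
  have hspec : B = U * diagonal ev * Uᵀ := by
    have h := hB.spectral_theorem
    have h2 : (RCLike.ofReal ∘ hB.eigenvalues : Fin n → ℝ) = ev := by funext i; simp [hev]
    rw [h2] at h
    rw [hUstar]
    exact h
  have hdiag : Uᵀ * B * U = diagonal ev := by
    rw [hspec]
    have : Uᵀ * (U * diagonal ev * Uᵀ) * U = (Uᵀ * U) * diagonal ev * (Uᵀ * U) := by
      simp only [Matrix.mul_assoc]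
    rw [this, hU2, Matrix.one_mul, Matrix.mul_one]
  -- the target value
  set t : ℝ := (∑ i, if ev i < 0 then (ev i)^2 else 0) + frobSq C with htdef
  -- conjugation preserves frobSq (other direction)
  have hconj' : ∀ X : Matrix (Fin n) (Fin n) ℝ, frobSq (U * X * Uᵀ) = frobSq X := by
    intro X
    have := frobSq_conj (U := Uᵀ)
      (by rw [Matrix.transpose_transpose]; exact hU2)
      (by rw [Matrix.transpose_transpose]; exact hU1) X
    rwa [Matrix.transpose_transpose] at this
  -- the minimizer
  set dplus : Fin n → ℝ := fun i => max (ev i) 0 with hdplusdef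
  set S₀ : Matrix (Fin n) (Fin n) ℝ := U * diagonal dplus * Uᵀ with hS0def
  have hS0psd : S₀.PosSemidef := by
    have hd : Matrix.PosSemidef (diagonal dplus) :=
      Matrix.PosSemidef.diagonal fun i => le_max_right _ _
    have := hd.mul_mul_conjTranspose_same U
    rw [hS0def, hUstar]
    exact this
  have hS0symm : S₀ᵀ = S₀ := by
    rw [hS0def]
    simp [Matrix.transpose_mul, Matrix.mul_assoc]
  have hsub : S₀ - B = U * diagonal (fun i => dplus i - ev i) * Uᵀ := by
    rw [hS0def, hspec, ← Matrix.sub_mul, ← Matrix.mul_sub, Matrix.diagonal_sub]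
  have hdpev : ∑ i, (dplus i - ev i)^2 = ∑ i, if ev i < 0 then (ev i)^2 else 0 := by
    refine Finset.sum_congr rfl fun i _ => ?_
    by_cases hlt : ev i < 0
    · rw [if_pos hlt, hdplusdef]
      simp only [max_eq_right hlt.le]
      ring
    · rw [if_neg hlt, hdplusdef]
      simp only [max_eq_left (not_lt.mp hlt)]
      ring
  have hfrobneg : frobSq (-C) = frobSq C := by simp [frobSq]
  have hmem : t ∈ {d : ℝ | ∃ E : Matrix (Fin n) (Fin n) ℝ, (A + E).PosSemidef ∧ d = frobSq E} := by
    refine ⟨S₀ - A, by rwa [add_sub_cancel], ?_⟩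
    have hE : S₀ - A = (S₀ - B) + (-C) := by rw [hABC]; abel
    rw [hE, frobSq_add_symm_skew (by rw [Matrix.transpose_sub, hS0symm, hBsymm])
      (by rw [Matrix.transpose_neg, hCskew, neg_neg]), hfrobneg, hsub, hconj',
      frobSq_diagonal, hdpev, htdef]
  have hlb : ∀ d ∈ {d : ℝ | ∃ E : Matrix (Fin n) (Fin n) ℝ, (A + E).PosSemidef ∧ d = frobSq E},
      t ≤ d := by
    rintro d ⟨E, hpsd, rfl⟩
    have hSsymm : (A + E)ᵀ = A + E := by
      have h := hpsd.1
      ext i j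
      have := congrFun (congrFun h i) j
      simpa [Matrix.conjTranspose_apply] using this
    have hE : E = ((A + E) - B) + (-C) := by rw [hABC]; abel
    rw [hE, frobSq_add_symm_skew (by rw [Matrix.transpose_sub, hSsymm, hBsymm])
      (by rw [Matrix.transpose_neg, hCskew, neg_neg]), hfrobneg, htdef]
    have hkey : (∑ i, if ev i < 0 then (ev i)^2 else 0) ≤ frobSq ((A + E) - B) := by
      set M : Matrix (Fin n) (Fin n) ℝ := Uᵀ * (A + E) * U with hMdef
      have hMpsd : M.PosSemidef := by
        have := hpsd.conjTranspose_mul_mul_same U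
        rw [hMdef, hUstar]
        exact this
      have heq : frobSq ((A + E) - B) = frobSq (M - diagonal ev) := by
        rw [← frobSq_conj hU1 hU2 ((A + E) - B)]
        congr 1
        rw [Matrix.mul_sub, Matrix.sub_mul, ← hdiag, hMdef]
      rw [heq]
      have step1 : ∑ i, (M i i - ev i)^2 ≤ frobSq (M - diagonal ev) := by
        rw [frobSq]
        refine Finset.sum_le_sum fun i _ => ?_
        have h := Finset.single_le_sum (f := fun j => ((M - diagonal ev) i j)^2)
          (fun j _ => sq_nonneg _) (Finset.mem_univ i)
        simpa [Matrix.sub_apply, Matrix.diagonal_apply_eq] using h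
      refine le_trans ?_ step1
      refine Finset.sum_le_sum fun i _ => ?_
      by_cases hlt : ev i < 0
      · rw [if_pos hlt]
        have h0 : 0 ≤ M i i := posSemidef_diag_nn hMpsd i
        nlinarith
      · rw [if_neg hlt]
        exact sq_nonneg _
    linarith
  exact le_antisymm (csInf_le ⟨t, hlb⟩ hmem) (le_csInf ⟨t, hmem⟩ hlb)
end

section
/- A real (2k+1)-banded Toeplitz matrix T = (n; k; σ, δ, τ) of order n with k ≤ ⌊n/2⌋ is normal (T Tᵀ = Tᵀ T) if and only if T is symmetric or T − δI is skew-symmetric. -/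
open Matrix Real Finset

/-- The symbol of the banded Toeplitz matrix, as a function on ℤ. -/
def al (k : ℕ) (σ τ : ℕ → ℝ) (δ : ℝ) : ℤ → ℝ := fun m =>
  if m = 0 then δ
  else if 0 < m ∧ m ≤ (k : ℤ) then σ m.toNat
  else if m < 0 ∧ -m ≤ (k : ℤ) then τ (-m).toNat
  else 0

lemma al_entry {n k : ℕ} (σ τ : ℕ → ℝ) (δ : ℝ) (i j : Fin n) :
    bandedToeplitz n k σ τ δ i j = al k σ τ δ (((i : ℕ) : ℤ) - ((j : ℕ) : ℤ)) := by
  unfold bandedToeplitz al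
  simp only [Matrix.of_apply]
  split_ifs <;> first
    | rfl | omega | (congr 1; omega) | (exfalso; omega)

lemma al_eq_zero {k : ℕ} (σ τ : ℕ → ℝ) (δ : ℝ) {m : ℤ}
    (hm : (k : ℤ) < m ∨ m < -(k : ℤ)) : al k σ τ δ m = 0 := by
  unfold al
  split_ifs <;> first | rfl | omega

lemma sum_fin_to_ico {n : ℕ} (f : ℤ → ℝ) :
    ∑ l : Fin n, f ((l : ℕ) : ℤ) = ∑ l ∈ Finset.Ico (0 : ℤ) (n : ℤ), f l := by
  rw [Fin.sum_univ_eq_sum_range (fun l => f (l : ℤ))]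
  have himg : (Finset.range n).image (fun l : ℕ => (l : ℤ)) = Finset.Ico (0 : ℤ) (n : ℤ) := by
    ext m
    simp only [Finset.mem_image, Finset.mem_range, Finset.mem_Ico]
    constructor
    · rintro ⟨a, ha, rfl⟩; omega
    · intro hm; exact ⟨m.toNat, by omega, by omega⟩
  rw [← himg, Finset.sum_image (fun x _ y _ h => by exact_mod_cast h)]

section corner

variable {n k : ℕ} (σ τ : ℕ → ℝ) (δ : ℝ)

/-- The corner equations for a normal banded Toeplitz matrix. -/
lemma corner_eq (hn : 2 * k ≤ n)
    (hT : bandedToeplitz n k σ τ δ * (bandedToeplitz n k σ τ δ)ᵀ =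
      (bandedToeplitz n k σ τ δ)ᵀ * bandedToeplitz n k σ τ δ)
    (p q : ℕ) (hq : q + 1 ≤ k) (hp : p + 1 ≤ k) :
    ∑ t ∈ Finset.Icc (1 : ℤ) (k : ℤ), al k σ τ δ ((p : ℤ) + t) * al k σ τ δ ((q : ℤ) + t) =
    ∑ t ∈ Finset.Icc (1 : ℤ) (k : ℤ), al k σ τ δ (-(p : ℤ) - t) * al k σ τ δ (-(q : ℤ) - t) := by
  set A := al k σ τ δ with hA
  set T := bandedToeplitz n k σ τ δ with hTdef
  have hpn : p < n := by omega
  have hqn : q < n := by omega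
  have h1 := congrFun (congrFun hT ⟨p, hpn⟩) ⟨q, hqn⟩
  rw [Matrix.mul_apply, Matrix.mul_apply] at h1
  simp only [Matrix.transpose_apply] at h1
  simp only [hTdef, al_entry σ τ δ, ← hA] at h1
  -- h1 : ∑ l : Fin n, A (p - l) * A (q - l) = ∑ l : Fin n, A (l - p) * A (l - q)
  set F : ℤ → ℝ := fun l => A ((p : ℤ) - l) * A ((q : ℤ) - l) with hF
  set G : ℤ → ℝ := fun l => A (l - (p : ℤ)) * A (l - (q : ℤ)) with hG
  have h2 : ∑ l ∈ Finset.Ico (0 : ℤ) (n : ℤ), F l = ∑ l ∈ Finset.Ico (0 : ℤ) (n : ℤ), G l := by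
    rw [← sum_fin_to_ico F, ← sum_fin_to_ico G]
    exact h1
  -- vanishing of G outside [-k, n)
  have hGzero : ∀ l : ℤ, (l < -(k : ℤ) ∨ (n : ℤ) ≤ l) → G l = 0 := by
    intro l hl
    rcases hl with hl | hl
    · have : A (l - (q : ℤ)) = 0 := al_eq_zero σ τ δ (Or.inr (by omega))
      simp [hG, this]
    · have : A (l - (p : ℤ)) = 0 := al_eq_zero σ τ δ (Or.inl (by omega))
      simp [hG, this]
  -- reflection identity over the extended interval
  have h3 : ∑ l ∈ Finset.Ico (-(k : ℤ)) (n : ℤ), F l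
      = ∑ l ∈ Finset.Ico (-(k : ℤ)) (n : ℤ), G l := by
    set s := Finset.Ico (-(k : ℤ)) (n : ℤ) with hs
    set f : ℤ → ℤ := fun l => (p : ℤ) + (q : ℤ) - l with hf
    have hinj : ∀ x ∈ s, ∀ y ∈ s, f x = f y → x = y := by
      intro x _ y _ h; simp only [hf] at h; omega
    have hFG : ∀ l ∈ s, G (f l) = F l := by
      intro l _
      simp only [hF, hG, hf]
      have e1 : (p : ℤ) + (q : ℤ) - l - (p : ℤ) = (q : ℤ) - l := by ring
      have e2 : (p : ℤ) + (q : ℤ) - l - (q : ℤ) = (p : ℤ) - l := by ring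
      rw [e1, e2, mul_comm]
    have himg : ∑ l ∈ s.image f, G l = ∑ l ∈ s, F l := by
      rw [Finset.sum_image hinj]
      exact Finset.sum_congr rfl hFG
    -- both s.image f and s sums of G equal the sum over the union
    have hsub1 : s.image f ⊆ s.image f ∪ s := Finset.subset_union_left
    have hsub2 : s ⊆ s.image f ∪ s := Finset.subset_union_right
    have hv1 : ∀ l ∈ s.image f ∪ s, l ∉ s.image f → G l = 0 := by
      intro l _ hl
      have hnot : (p : ℤ) + (q : ℤ) - l ∉ s := by
        intro hmem
        exact hl (Finset.mem_image.mpr ⟨(p : ℤ) + (q : ℤ) - l, hmem, by simp only [hf]; omega⟩)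
      rw [hs, Finset.mem_Ico] at hnot
      push_neg at hnot
      by_cases hc : -(k : ℤ) ≤ (p : ℤ) + (q : ℤ) - l
      · have hge : (n : ℤ) ≤ (p : ℤ) + (q : ℤ) - l := hnot hc
        have : A (l - (q : ℤ)) = 0 := al_eq_zero σ τ δ (Or.inr (by omega))
        simp [hG, this]
      · push_neg at hc
        have : A (l - (p : ℤ)) = 0 := al_eq_zero σ τ δ (Or.inl (by omega))
        simp [hG, this]
    have hv2 : ∀ l ∈ s.image f ∪ s, l ∉ s → G l = 0 := by
      intro l _ hl
      rw [hs, Finset.mem_Ico] at hl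
      push_neg at hl
      by_cases hc : -(k : ℤ) ≤ l
      · exact hGzero l (Or.inr (hl hc))
      · exact hGzero l (Or.inl (by omega))
    calc ∑ l ∈ s, F l = ∑ l ∈ s.image f, G l := himg.symm
      _ = ∑ l ∈ s.image f ∪ s, G l := Finset.sum_subset hsub1 (by intro x hx hxs; exact hv1 x hx hxs)
      _ = ∑ l ∈ s, G l := (Finset.sum_subset hsub2 (by intro x hx hxs; exact hv2 x hx hxs)).symm
  -- split off the prefix [-k, 0)
  have hsplit : ∀ h : ℤ → ℝ,
      ∑ l ∈ Finset.Ico (-(k : ℤ)) (n : ℤ), h l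
        = (∑ l ∈ Finset.Ico (-(k : ℤ)) (0 : ℤ), h l) + ∑ l ∈ Finset.Ico (0 : ℤ) (n : ℤ), h l := by
    intro h
    rw [← Finset.Ico_union_Ico_eq_Ico (by omega : -(k:ℤ) ≤ 0) (by omega : (0:ℤ) ≤ (n:ℤ)),
      Finset.sum_union (Finset.Ico_disjoint_Ico_consecutive _ _ _)]
  have h4 : ∑ l ∈ Finset.Ico (-(k : ℤ)) (0 : ℤ), F l
      = ∑ l ∈ Finset.Ico (-(k : ℤ)) (0 : ℤ), G l := by
    have := h3
    rw [hsplit F, hsplit G, h2] at this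
    linarith
  -- reindex [-k,0) by negation to [1,k]
  have hneg : ∀ h : ℤ → ℝ, ∑ l ∈ Finset.Ico (-(k : ℤ)) (0 : ℤ), h l
      = ∑ t ∈ Finset.Icc (1 : ℤ) (k : ℤ), h (-t) := by
    intro h
    have himg : (Finset.Icc (1 : ℤ) (k : ℤ)).image (fun t => -t) = Finset.Ico (-(k : ℤ)) 0 := by
      ext m
      simp only [Finset.mem_image, Finset.mem_Icc, Finset.mem_Ico]
      constructor
      · rintro ⟨a, ha, rfl⟩; omega
      · intro hm; exact ⟨-m, by omega, by omega⟩
    rw [← himg, Finset.sum_image (by intro x _ y _ h'; simpa using h')]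
  rw [hneg F, hneg G] at h4
  calc ∑ t ∈ Finset.Icc (1 : ℤ) (k : ℤ), A ((p : ℤ) + t) * A ((q : ℤ) + t)
      = ∑ t ∈ Finset.Icc (1 : ℤ) (k : ℤ), F (-t) := by
        apply Finset.sum_congr rfl; intro t _
        simp only [hF]
        rw [show (p : ℤ) - -t = (p : ℤ) + t by ring, show (q : ℤ) - -t = (q : ℤ) + t by ring]
    _ = ∑ t ∈ Finset.Icc (1 : ℤ) (k : ℤ), G (-t) := h4
    _ = ∑ t ∈ Finset.Icc (1 : ℤ) (k : ℤ), A (-(p : ℤ) - t) * A (-(q : ℤ) - t) := by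
        apply Finset.sum_congr rfl; intro t _
        simp only [hG]
        rw [show -t - (p : ℤ) = -(p : ℤ) - t by ring, show -t - (q : ℤ) = -(q : ℤ) - t by ring]

/-- From the corner equations: pairwise products agree. -/
lemma prod_eq (hn : 2 * k ≤ n)
    (hT : bandedToeplitz n k σ τ δ * (bandedToeplitz n k σ τ δ)ᵀ =
      (bandedToeplitz n k σ τ δ)ᵀ * bandedToeplitz n k σ τ δ) :
    ∀ a b : ℕ, 1 ≤ b → b ≤ a →
      al k σ τ δ (a : ℤ) * al k σ τ δ (b : ℤ)
        = al k σ τ δ (-(a : ℤ)) * al k σ τ δ (-(b : ℤ)) := by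
  set A := al k σ τ δ with hA
  have main : ∀ j : ℕ, ∀ a b : ℕ, 1 ≤ b → b ≤ a → k + 1 ≤ a + j →
      A (a : ℤ) * A (b : ℤ) = A (-(a : ℤ)) * A (-(b : ℤ)) := by
    intro j
    induction j with
    | zero =>
      intro a b hb hba hak
      have h1 : A (a : ℤ) = 0 := al_eq_zero σ τ δ (Or.inl (by omega))
      have h2 : A (-(a : ℤ)) = 0 := al_eq_zero σ τ δ (Or.inr (by omega))
      rw [h1, h2, zero_mul, zero_mul]
    | succ j ih =>
      intro a b hb hba hak
      by_cases hcase : k + 1 ≤ a + j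
      · exact ih a b hb hba hcase
      · have hak' : a + j = k := by omega
        have hak2 : a ≤ k := by omega
        have hc := corner_eq σ τ δ hn hT (a - 1) (b - 1) (by omega) (by omega)
        rw [← hA] at hc
        have hzero : ∑ t ∈ Finset.Icc (1 : ℤ) (k : ℤ),
            (A ((↑(a - 1) : ℤ) + t) * A ((↑(b - 1) : ℤ) + t)
              - A (-(↑(a - 1) : ℤ) - t) * A (-(↑(b - 1) : ℤ) - t)) = 0 := by
          rw [Finset.sum_sub_distrib, hc, sub_self]
        have hone : (1 : ℤ) ∈ Finset.Icc (1 : ℤ) (k : ℤ) := by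
          rw [Finset.mem_Icc]; omega
        have hterm : ∀ t ∈ Finset.Icc (1 : ℤ) (k : ℤ), t ≠ 1 →
            A ((↑(a - 1) : ℤ) + t) * A ((↑(b - 1) : ℤ) + t)
              - A (-(↑(a - 1) : ℤ) - t) * A (-(↑(b - 1) : ℤ) - t) = 0 := by
          intro t ht hne
          rw [Finset.mem_Icc] at ht
          have ht2 : 2 ≤ t := by omega
          set a' : ℕ := a - 1 + t.toNat with ha'
          set b' : ℕ := b - 1 + t.toNat with hb'
          have e1 : ((a - 1 : ℕ) : ℤ) + t = (a' : ℤ) := by simp only [ha']; push_cast; omega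
          have e2 : ((b - 1 : ℕ) : ℤ) + t = (b' : ℤ) := by simp only [hb']; push_cast; omega
          have e3 : -((a - 1 : ℕ) : ℤ) - t = -(a' : ℤ) := by simp only [ha']; push_cast; omega
          have e4 : -((b - 1 : ℕ) : ℤ) - t = -(b' : ℤ) := by simp only [hb']; push_cast; omega
          rw [e1, e2, e3, e4, ih a' b' (by omega) (by omega) (by omega), sub_self]
        have hfinal : A ((↑(a - 1) : ℤ) + 1) * A ((↑(b - 1) : ℤ) + 1)
            - A (-(↑(a - 1) : ℤ) - 1) * A (-(↑(b - 1) : ℤ) - 1) = 0 := by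
          rw [← hzero]
          exact (Finset.sum_eq_single_of_mem (1 : ℤ) hone hterm).symm
        have e1 : ((a - 1 : ℕ) : ℤ) + 1 = (a : ℤ) := by push_cast; omega
        have e2 : ((b - 1 : ℕ) : ℤ) + 1 = (b : ℤ) := by push_cast; omega
        have e3 : -((a - 1 : ℕ) : ℤ) - 1 = -(a : ℤ) := by push_cast; omega
        have e4 : -((b - 1 : ℕ) : ℤ) - 1 = -(b : ℤ) := by push_cast; omega
        rw [e1, e2, e3, e4] at hfinal
        linarith [hfinal]
  intro a b hb hba
  exact main k a b hb hba (by omega)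

end corner

section structure_lemmas

variable {n k : ℕ} (σ τ : ℕ → ℝ) (δ : ℝ)

lemma sym_of (h : ∀ m : ℕ, 1 ≤ m → m ≤ k → σ m = τ m) :
    (bandedToeplitz n k σ τ δ)ᵀ = bandedToeplitz n k σ τ δ := by
  ext i j
  show bandedToeplitz n k σ τ δ j i = bandedToeplitz n k σ τ δ i j
  unfold bandedToeplitz
  simp only [Matrix.of_apply]
  split_ifs <;> first
    | rfl | omega | (exfalso; omega)
    | (exact h _ (by omega) (by omega)) | (exact (h _ (by omega) (by omega)).symm)

lemma skew_of (h : ∀ m : ℕ, 1 ≤ m → m ≤ k → σ m = -τ m) :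
    (bandedToeplitz n k σ τ δ - δ • (1 : Matrix (Fin n) (Fin n) ℝ))ᵀ =
      -(bandedToeplitz n k σ τ δ - δ • (1 : Matrix (Fin n) (Fin n) ℝ)) := by
  ext i j
  simp only [Matrix.transpose_apply, Matrix.sub_apply, Matrix.neg_apply, Matrix.smul_apply,
    Matrix.one_apply, smul_eq_mul]
  unfold bandedToeplitz
  simp only [Matrix.of_apply, ← Fin.val_eq_val]
  split_ifs <;> first
    | ring1 | omega | (exfalso; omega)
    | (rw [h _ (by omega) (by omega)]; ring1)

end structure_lemmas

/-- a (2k+1)-banded Toeplitz matrix of order n with k ≤ ⌊n/2⌋ is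
normal iff it is symmetric or shifted skew-symmetric. -/
theorem banded_toeplitz_normal_iff {n k : ℕ} (hk : k ≤ n / 2)
    (σ τ : ℕ → ℝ) (δ : ℝ) :
    bandedToeplitz n k σ τ δ * (bandedToeplitz n k σ τ δ)ᵀ =
      (bandedToeplitz n k σ τ δ)ᵀ * bandedToeplitz n k σ τ δ ↔
    ((bandedToeplitz n k σ τ δ)ᵀ = bandedToeplitz n k σ τ δ ∨
     (bandedToeplitz n k σ τ δ - δ • (1 : Matrix (Fin n) (Fin n) ℝ))ᵀ =
       -(bandedToeplitz n k σ τ δ - δ • (1 : Matrix (Fin n) (Fin n) ℝ))) := by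
  have hn : 2 * k ≤ n := by omega
  constructor
  · intro hT
    have key : ∀ a b : ℕ, 1 ≤ a → a ≤ k → 1 ≤ b → b ≤ k → σ a * σ b = τ a * τ b := by
      intro a b ha hak hb hbk
      have base : ∀ c d : ℕ, 1 ≤ d → d ≤ c → c ≤ k → σ c * σ d = τ c * τ d := by
        intro c d hd hdc hck
        have hp := prod_eq σ τ δ hn hT c d hd hdc
        have ec1 : al k σ τ δ (c : ℤ) = σ c := by
          unfold al; rw [if_neg (by omega), if_pos (by constructor <;> omega)]; norm_num
        have ec2 : al k σ τ δ (d : ℤ) = σ d := by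
          unfold al; rw [if_neg (by omega), if_pos (by constructor <;> omega)]; norm_num
        have ec3 : al k σ τ δ (-(c : ℤ)) = τ c := by
          unfold al
          rw [if_neg (by omega), if_neg (by omega), if_pos (by constructor <;> omega)]; norm_num
        have ec4 : al k σ τ δ (-(d : ℤ)) = τ d := by
          unfold al
          rw [if_neg (by omega), if_neg (by omega), if_pos (by constructor <;> omega)]; norm_num
        rw [ec1, ec2, ec3, ec4] at hp
        exact hp
      rcases le_total b a with hba | hab
      · exact base a b hb hba hak
      · rw [mul_comm (σ a), mul_comm (τ a)]
        exact base b a ha hab hbk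
    by_cases hs : ∀ m : ℕ, 1 ≤ m → m ≤ k → σ m = τ m
    · exact Or.inl (sym_of σ τ δ hs)
    · right
      apply skew_of
      push_neg at hs
      obtain ⟨m0, hm01, hm0k, hm0ne⟩ := hs
      have hsq := key m0 m0 hm01 hm0k hm01 hm0k
      have hm0neg : σ m0 = -τ m0 := by
        rcases mul_self_eq_mul_self_iff.mp hsq with h | h
        · exact absurd h hm0ne
        · exact h
      have hm0nz : σ m0 ≠ 0 := by
        intro h0
        apply hm0ne
        rw [h0] at hm0neg ⊢
        have : τ m0 = 0 := by linarith
        rw [this]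
      intro m h1 h2
      have hp := key m m0 h1 h2 hm01 hm0k
      rw [hm0neg] at hp
      -- σ m * (-τ m0) = τ m * τ m0,  and τ m0 = -σ m0
      have hτ : τ m0 = -σ m0 := by linarith
      rw [hτ] at hp
      -- σ m * (- - σ m0) = τ m * (-σ m0)
      have : σ m * σ m0 = -τ m * σ m0 := by ring_nf at hp ⊢; linarith
      exact mul_right_cancel₀ hm0nz this
  · rintro (h | h)
    · rw [h]
    · have hT : (bandedToeplitz n k σ τ δ)ᵀ
          = (2 * δ) • (1 : Matrix (Fin n) (Fin n) ℝ) - bandedToeplitz n k σ τ δ := by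
        have := h
        rw [Matrix.transpose_sub, Matrix.transpose_smul, Matrix.transpose_one] at this
        have h2 : (bandedToeplitz n k σ τ δ)ᵀ
            = -(bandedToeplitz n k σ τ δ - δ • 1) + δ • 1 := by
          rw [← this]; abel
        rw [h2]
        ext i j
        simp [Matrix.sub_apply, Matrix.neg_apply, Matrix.smul_apply, Matrix.one_apply]
        ring_nf
        split_ifs <;> ring
      rw [hT, Matrix.mul_sub, Matrix.sub_mul, Matrix.mul_smul, Matrix.smul_mul,
        Matrix.mul_one, Matrix.one_mul]
end

section
/- For a real tridiagonal Toeplitz matrix T = (n;1;σ₁,δ,τ₁), the squared banded-Toeplitz-structured distance to normality equals ((n−1)/2)·(|σ₁| − |τ₁|)², i.e., ((n−1)/2)·min{(σ₁−τ₁)², (σ₁+τ₁)²}. -/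
open Matrix Real Finset

lemma tri_transpose (n : ℕ) (s e t : ℝ) :
    (triToeplitz n s e t)ᵀ = triToeplitz n t e s := by
  ext i j
  simp only [triToeplitz, bandedToeplitz, transpose_apply, of_apply]
  split_ifs <;> first | rfl | omega

lemma tri_sub (n : ℕ) (a d b s e t : ℝ) :
    triToeplitz n a d b - triToeplitz n s e t = triToeplitz n (a-s) (d-e) (b-t) := by
  ext i j
  simp only [triToeplitz, bandedToeplitz, Matrix.sub_apply, of_apply]
  split_ifs <;> ring

lemma tri_skew (n : ℕ) (s e : ℝ) :
    triToeplitz n (-s) e s = (2*e) • (1 : Matrix (Fin n) (Fin n) ℝ) - triToeplitz n s e (-s) := by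
  ext i j
  simp only [triToeplitz, bandedToeplitz, Matrix.sub_apply, Matrix.smul_apply, one_apply, of_apply, smul_eq_mul]
  have : i = j ↔ (i:ℕ) = (j:ℕ) := (Fin.val_eq_val i j).symm
  split_ifs with h1 h2 h3 <;> simp_all <;> ring

lemma frobSq_tri (n : ℕ) (hn : 1 ≤ n) (a d b : ℝ) :
    frobSq (triToeplitz n a d b) = n*d^2 + ((n:ℝ)-1)*a^2 + ((n:ℝ)-1)*b^2 := by
  have key : ∀ i j : Fin n, (triToeplitz n a d b i j)^2 =
      (if (i:ℕ) = (j:ℕ) then d^2 else 0) + (if (j:ℕ)+1 = (i:ℕ) then a^2 else 0)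
        + (if (i:ℕ)+1 = (j:ℕ) then b^2 else 0) := by
    intro i j
    simp only [triToeplitz, bandedToeplitz, of_apply]
    split_ifs <;> first | omega | ring
  have hcount : ∀ c : ℝ, ∑ j ∈ range n, (if j + 1 < n then c else 0) = ((n:ℝ) - 1) * c := by
    intro c
    rw [← Finset.sum_filter]
    have : (range n).filter (fun j => j + 1 < n) = range (n-1) := by
      ext x; simp only [mem_filter, mem_range]; omega
    rw [this, Finset.sum_const, Finset.card_range, nsmul_eq_mul, Nat.cast_sub hn, Nat.cast_one]
  unfold frobSq
  simp only [key, Finset.sum_add_distrib]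
  congr 1
  · congr 1
    · have h1 : ∀ i : Fin n, ∑ j : Fin n, (if (i:ℕ) = (j:ℕ) then d^2 else 0) = d^2 := by
        intro i
        simp [Fin.val_eq_val, Finset.sum_ite_eq]
      simp [h1, Finset.card_univ, mul_comm]
    · rw [Finset.sum_comm]
      have h1 : ∀ j : Fin n, ∑ i : Fin n, (if (j:ℕ)+1 = (i:ℕ) then a^2 else 0)
          = (if (j:ℕ)+1 < n then a^2 else 0) := by
        intro j
        rw [Fin.sum_univ_eq_sum_range (fun i => if (j:ℕ)+1 = i then a^2 else 0) n]
        rw [Finset.sum_ite_eq (range n) ((j:ℕ)+1) (fun _ => a^2)]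
        simp [mem_range]
      simp only [h1]
      rw [Fin.sum_univ_eq_sum_range (fun j => if j+1 < n then a^2 else 0) n]
      exact hcount (a^2)
  · have h1 : ∀ i : Fin n, ∑ j : Fin n, (if (i:ℕ)+1 = (j:ℕ) then b^2 else 0)
        = (if (i:ℕ)+1 < n then b^2 else 0) := by
      intro i
      rw [Fin.sum_univ_eq_sum_range (fun j => if (i:ℕ)+1 = j then b^2 else 0) n]
      rw [Finset.sum_ite_eq (range n) ((i:ℕ)+1) (fun _ => b^2)]
      simp [mem_range]
    simp only [h1]
    rw [Fin.sum_univ_eq_sum_range (fun i => if i+1 < n then b^2 else 0) n]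
    exact hcount (b^2)

lemma normal_sq {n : ℕ} (hn : 2 ≤ n) (s e t : ℝ)
    (h : triToeplitz n s e t * (triToeplitz n s e t)ᵀ
        = (triToeplitz n s e t)ᵀ * triToeplitz n s e t) :
    s^2 = t^2 := by
  have h0 : 0 < n := by omega
  have h00 := congrFun (congrFun h ⟨0, h0⟩) ⟨0, h0⟩
  rw [Matrix.mul_apply, Matrix.mul_apply] at h00
  simp only [transpose_apply] at h00
  have hrow : ∀ k : Fin n, triToeplitz n s e t ⟨0, h0⟩ k * triToeplitz n s e t ⟨0, h0⟩ k
      = (if (k:ℕ) = 0 then e^2 else 0) + (if (k:ℕ) = 1 then t^2 else 0) := by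
    intro k
    simp only [triToeplitz, bandedToeplitz, of_apply]
    split_ifs <;> first | omega | ring
  have hcol : ∀ k : Fin n, triToeplitz n s e t k ⟨0, h0⟩ * triToeplitz n s e t k ⟨0, h0⟩
      = (if (k:ℕ) = 0 then e^2 else 0) + (if (k:ℕ) = 1 then s^2 else 0) := by
    intro k
    simp only [triToeplitz, bandedToeplitz, of_apply]
    split_ifs <;> first | omega | ring
  have hsum : ∀ c c' : ℝ, ∑ k : Fin n,
      ((if (k:ℕ) = 0 then c else 0) + (if (k:ℕ) = 1 then c' else 0)) = c + c' := by
    intro c c'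
    rw [Finset.sum_add_distrib]
    rw [Fin.sum_univ_eq_sum_range (fun k => if k = 0 then c else 0) n]
    rw [Fin.sum_univ_eq_sum_range (fun k => if k = 1 then c' else 0) n]
    rw [Finset.sum_ite_eq' (range n) 0 (fun _ => c), Finset.sum_ite_eq' (range n) 1 (fun _ => c')]
    have h1 : 1 < n := by omega
    simp [mem_range, h0, h1]
  rw [Finset.sum_congr rfl (fun k _ => hrow k), Finset.sum_congr rfl (fun k _ => hcol k),
    hsum, hsum] at h00
  linarith

/-- the squared tridiagonal-Toeplitz-structured distance to normality
of `T = (n;1;σ₁,δ,τ₁)` is `((n−1)/2)·min{(σ₁−τ₁)², (σ₁+τ₁)²}`. -/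
theorem tridiag_structured_distance_to_normality {n : ℕ} (hn : 2 ≤ n)
    (σ₁ δ τ₁ : ℝ) :
    sInf {d : ℝ | ∃ s t e : ℝ,
        triToeplitz n s e t * (triToeplitz n s e t)ᵀ =
          (triToeplitz n s e t)ᵀ * triToeplitz n s e t ∧
        d = frobSq (triToeplitz n σ₁ δ τ₁ - triToeplitz n s e t)} =
      (((n : ℝ) - 1)/2) * min ((σ₁ - τ₁)^2) ((σ₁ + τ₁)^2) := by
  have hn1 : 1 ≤ n := by omega
  have hnr : (2:ℝ) ≤ (n:ℝ) := by exact_mod_cast hn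
  set M := min ((σ₁ - τ₁)^2) ((σ₁ + τ₁)^2) with hM
  -- membership
  have hmem : (((n : ℝ) - 1)/2) * M ∈ {d : ℝ | ∃ s t e : ℝ,
      triToeplitz n s e t * (triToeplitz n s e t)ᵀ =
        (triToeplitz n s e t)ᵀ * triToeplitz n s e t ∧
      d = frobSq (triToeplitz n σ₁ δ τ₁ - triToeplitz n s e t)} := by
    rcases le_total ((σ₁ - τ₁)^2) ((σ₁ + τ₁)^2) with hc | hc
    · refine ⟨(σ₁+τ₁)/2, (σ₁+τ₁)/2, δ, ?_, ?_⟩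
      · rw [tri_transpose]
      · rw [tri_sub, frobSq_tri n hn1, hM, min_eq_left hc]
        ring
    · refine ⟨(σ₁-τ₁)/2, -((σ₁-τ₁)/2), δ, ?_, ?_⟩
      · have h1 : (triToeplitz n ((σ₁-τ₁)/2) δ (-((σ₁-τ₁)/2)))ᵀ
            = (2*δ) • (1 : Matrix (Fin n) (Fin n) ℝ)
              - triToeplitz n ((σ₁-τ₁)/2) δ (-((σ₁-τ₁)/2)) := by
          rw [tri_transpose, ← tri_skew]
        rw [h1, mul_sub, sub_mul, Matrix.mul_smul, Matrix.smul_mul, Matrix.mul_one,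
          Matrix.one_mul]
      · rw [tri_sub, frobSq_tri n hn1, hM, min_eq_right hc]
        ring
  -- lower bound
  have hlb : ∀ d ∈ {d : ℝ | ∃ s t e : ℝ,
      triToeplitz n s e t * (triToeplitz n s e t)ᵀ =
        (triToeplitz n s e t)ᵀ * triToeplitz n s e t ∧
      d = frobSq (triToeplitz n σ₁ δ τ₁ - triToeplitz n s e t)},
      (((n : ℝ) - 1)/2) * M ≤ d := by
    rintro d ⟨s, t, e, hnorm, rfl⟩
    rw [tri_sub, frobSq_tri n hn1]
    have hst : s^2 = t^2 := normal_sq hn s e t hnorm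
    have key : M ≤ 2*((σ₁-s)^2 + (τ₁-t)^2) := by
      rcases mul_eq_zero.mp (show (s-t)*(s+t) = (0:ℝ) by nlinarith) with h | h
      · have hts : t = s := by linarith
        rw [hts]
        calc M ≤ (σ₁ - τ₁)^2 := min_le_left _ _
          _ ≤ 2*((σ₁-s)^2 + (τ₁-s)^2) := by nlinarith [sq_nonneg (σ₁ + τ₁ - 2*s)]
      · have hts : t = -s := by linarith
        rw [hts]
        calc M ≤ (σ₁ + τ₁)^2 := min_le_right _ _
          _ ≤ 2*((σ₁-s)^2 + (τ₁-(-s))^2) := by nlinarith [sq_nonneg (σ₁ - τ₁ - 2*s)]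
    have h1 : (0:ℝ) ≤ ((n:ℝ)-1)/2 := by linarith
    have h2 := mul_le_mul_of_nonneg_left key h1
    have h3 : (0:ℝ) ≤ (n:ℝ) * (δ - e)^2 := by positivity
    nlinarith
  refine le_antisymm (csInf_le ⟨_, hlb⟩ hmem) (le_csInf ⟨_, hmem⟩ hlb)
end

section
/- Let T = (n;k;σ,δ,τ) with δ > 0. Then the squared (2k+1)-banded Toeplitz structured Frobenius distance from T to the set of symmetric positive semidefinite (2k+1)-banded Toeplitz matrices is at most min{ Σ_{i=1}^{k} (n−i)(σ_i² + τ_i²), n·max{0, Σ_{i=1}^{k}|σ_i+τ_i| − δ}² + Σ_{i=1}^{k} ((n−i)/2)(σ_i−τ_i)² }. -/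
open Matrix Real Finset

lemma banded_sub (n k : ℕ) (σ τ s t : ℕ → ℝ) (δ dd : ℝ) :
    bandedToeplitz n k σ τ δ - bandedToeplitz n k s t dd
      = bandedToeplitz n k (fun d => σ d - s d) (fun d => τ d - t d) (δ - dd) := by
  ext i j
  simp only [Matrix.sub_apply, bandedToeplitz, Matrix.of_apply]
  split_ifs <;> ring

lemma frobSq_nonneg {n : ℕ} (A : Matrix (Fin n) (Fin n) ℝ) : 0 ≤ frobSq A :=
  Finset.sum_nonneg fun _ _ => Finset.sum_nonneg fun _ _ => sq_nonneg _


lemma sum_range_sub_eq (F : ℕ → ℝ) (m : ℕ) :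
    ∑ j ∈ Finset.range m, F (m - j) = ∑ d ∈ Finset.Icc 1 m, F d := by
  rw [← Finset.Ico_add_one_right_eq_Icc, Finset.sum_Ico_eq_sum_range]
  simp only [Nat.add_sub_cancel]
  rw [← Finset.sum_range_reflect (fun j => F (1 + j)) m]
  refine Finset.sum_congr rfl fun j hj => ?_
  rw [Finset.mem_range] at hj
  congr 1
  omega

lemma sum_lower (n k : ℕ) (hk : k ≤ n) (F : ℕ → ℝ) (hF : ∀ d, k < d → F d = 0) :
    ∑ i : Fin n, ∑ j : Fin n, (if (j : ℕ) < (i : ℕ) then F ((i : ℕ) - (j : ℕ)) else 0)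
      = ∑ d ∈ Finset.Icc 1 k, ((n : ℝ) - d) * F d := by
  have step1 : ∀ i : Fin n,
      (∑ j : Fin n, (if (j : ℕ) < (i : ℕ) then F ((i : ℕ) - (j : ℕ)) else 0))
        = ∑ d ∈ Finset.Icc 1 k, (if d ≤ (i : ℕ) then F d else 0) := by
    intro i
    rw [Fin.sum_univ_eq_sum_range (fun j => if j < (i : ℕ) then F ((i : ℕ) - j) else 0) n]
    rw [← Finset.sum_subset (Finset.range_subset_range.2 i.isLt.le)
      (fun x _ hx => by rw [Finset.mem_range, not_lt] at hx; rw [if_neg (by omega)])]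
    have h1 : ∑ j ∈ Finset.range (i : ℕ), (if j < (i : ℕ) then F ((i : ℕ) - j) else 0)
        = ∑ j ∈ Finset.range (i : ℕ), F ((i : ℕ) - j) :=
      Finset.sum_congr rfl fun j hj => if_pos (Finset.mem_range.1 hj)
    rw [h1, sum_range_sub_eq]
    -- now: ∑ d ∈ Icc 1 i, F d = ∑ d ∈ Icc 1 k, if d ≤ i then F d else 0
    have hL : ∑ d ∈ Finset.Icc 1 (i : ℕ), F d
        = ∑ d ∈ Finset.Icc 1 n, (if d ≤ (i : ℕ) then F d else 0) := by
      rw [← Finset.sum_subset (Finset.Icc_subset_Icc_right i.isLt.le)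
        (fun x hx hx' => by
          rw [Finset.mem_Icc] at hx hx'
          rw [if_neg (by omega)])]
      exact Finset.sum_congr rfl fun d hd => (if_pos (Finset.mem_Icc.1 hd).2).symm
    have hR : ∑ d ∈ Finset.Icc 1 k, (if d ≤ (i : ℕ) then F d else 0)
        = ∑ d ∈ Finset.Icc 1 n, (if d ≤ (i : ℕ) then F d else 0) := by
      refine Finset.sum_subset (Finset.Icc_subset_Icc_right hk) (fun x hx hx' => ?_)
      rw [Finset.mem_Icc] at hx hx'
      rw [hF x (by omega)]
      simp
    rw [hL, hR]
  simp_rw [step1]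
  rw [Finset.sum_comm]
  refine Finset.sum_congr rfl fun d hd => ?_
  rw [Finset.mem_Icc] at hd
  rw [Fin.sum_univ_eq_sum_range (fun i => if d ≤ i then F d else 0) n]
  rw [Finset.sum_ite, Finset.sum_const, Finset.sum_const_zero, add_zero]
  have hfilt : (Finset.range n).filter (fun i => d ≤ i) = Finset.Ico d n := by
    ext x; simp [Finset.mem_filter, Finset.mem_range, Finset.mem_Ico]; omega
  rw [hfilt, Nat.card_Ico, nsmul_eq_mul, Nat.cast_sub (by omega)]

lemma sum_upper (n k : ℕ) (hk : k ≤ n) (F : ℕ → ℝ) (hF : ∀ d, k < d → F d = 0) :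
    ∑ i : Fin n, ∑ j : Fin n, (if (i : ℕ) < (j : ℕ) then F ((j : ℕ) - (i : ℕ)) else 0)
      = ∑ d ∈ Finset.Icc 1 k, ((n : ℝ) - d) * F d := by
  rw [Finset.sum_comm]
  exact sum_lower n k hk F hF


lemma frobSq_banded (n k : ℕ) (hk : k ≤ n) (f g : ℕ → ℝ) (c : ℝ) :
    frobSq (bandedToeplitz n k f g c)
      = n * c^2 + ∑ d ∈ Finset.Icc 1 k, ((n : ℝ) - d) * ((f d)^2 + (g d)^2) := by
  set Fl : ℕ → ℝ := fun d => if d ≤ k then (f d)^2 else 0 with hFl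
  set Fu : ℕ → ℝ := fun d => if d ≤ k then (g d)^2 else 0 with hFu
  have key : ∀ i j : Fin n, (bandedToeplitz n k f g c i j)^2
      = (if (i : ℕ) = (j : ℕ) then c^2 else 0)
        + ((if (j : ℕ) < (i : ℕ) then Fl ((i : ℕ) - (j : ℕ)) else 0)
        + (if (i : ℕ) < (j : ℕ) then Fu ((j : ℕ) - (i : ℕ)) else 0)) := by
    intro i j
    simp only [bandedToeplitz, Matrix.of_apply, hFl, hFu]
    rcases lt_trichotomy (i : ℕ) (j : ℕ) with h | h | h
    · by_cases hb : (j : ℕ) - (i : ℕ) ≤ k <;> split_ifs <;> first | ring1 | (exfalso; omega)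
    · split_ifs <;> first | ring1 | (exfalso; omega)
    · by_cases hb : (i : ℕ) - (j : ℕ) ≤ k <;> split_ifs <;> first | ring1 | (exfalso; omega)
  unfold frobSq
  simp_rw [key, Finset.sum_add_distrib]
  have hdiag : ∑ i : Fin n, ∑ j : Fin n, (if (i : ℕ) = (j : ℕ) then c^2 else 0)
      = n * c^2 := by
    simp [Fin.val_eq_val, Finset.sum_ite_eq, mul_comm]
  rw [hdiag, sum_lower n k hk Fl (fun d hd => by simp [hFl, Nat.not_le.2 hd, if_neg]),
    sum_upper n k hk Fu (fun d hd => by simp [hFu, Nat.not_le.2 hd, if_neg]),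
    ← Finset.sum_add_distrib]
  congr 1
  refine Finset.sum_congr rfl fun d hd => ?_
  rw [Finset.mem_Icc] at hd
  simp [hFl, hFu, hd.2]
  ring

lemma banded_symm (n k : ℕ) (s : ℕ → ℝ) (dd : ℝ) (i j : Fin n) :
    bandedToeplitz n k s s dd j i = bandedToeplitz n k s s dd i j := by
  simp only [bandedToeplitz, Matrix.of_apply]
  rcases lt_trichotomy (i : ℕ) (j : ℕ) with h | h | h <;>
    split_ifs <;> first | rfl | (exfalso; omega)

lemma banded_isHermitian (n k : ℕ) (s : ℕ → ℝ) (dd : ℝ) :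
    (bandedToeplitz n k s s dd).IsHermitian := by
  ext i j
  simp only [Matrix.conjTranspose_apply, star_trivial]
  exact banded_symm n k s dd i j

lemma sum_indicator_le {α : Type*} [Fintype α] [DecidableEq α] (P : α → Prop) [DecidablePred P]
    (c : ℝ) (hc : 0 ≤ c) (hP : ∀ a b, P a → P b → a = b) :
    ∑ a, (if P a then c else 0) ≤ c := by
  by_cases h : ∃ a, P a
  · obtain ⟨a, ha⟩ := h
    have : ∀ b : α, (if P b then c else 0) = (if b = a then c else 0) := by
      intro b
      by_cases hb : P b
      · rw [if_pos hb, if_pos (hP b a hb ha)]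
      · rw [if_neg hb, if_neg (fun hba : b = a => hb (hba ▸ ha))]
    simp_rw [this]
    rw [Finset.sum_ite_eq' Finset.univ a (fun _ => c), if_pos (Finset.mem_univ a)]
  · push_neg at h
    simp only [h, if_false]
    simp [hc]

lemma banded_rowsum (n k : ℕ) (s : ℕ → ℝ) (dd : ℝ) (i : Fin n) :
    ∑ j : Fin n, (if j = i then 0 else |bandedToeplitz n k s s dd i j|)
      ≤ ∑ d ∈ Finset.Icc 1 k, 2 * |s d| := by
  have hpt : ∀ j : Fin n, (if j = i then 0 else |bandedToeplitz n k s s dd i j|)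
      ≤ ∑ d ∈ Finset.Icc 1 k,
        ((if (j : ℕ) < (i : ℕ) ∧ (i : ℕ) - (j : ℕ) = d then |s d| else 0)
          + (if (i : ℕ) < (j : ℕ) ∧ (j : ℕ) - (i : ℕ) = d then |s d| else 0)) := by
    intro j
    have hnn : ∀ d ∈ Finset.Icc 1 k,
        (0:ℝ) ≤ (if (j : ℕ) < (i : ℕ) ∧ (i : ℕ) - (j : ℕ) = d then |s d| else 0)
          + (if (i : ℕ) < (j : ℕ) ∧ (j : ℕ) - (i : ℕ) = d then |s d| else 0) := by
      intro d _
      apply add_nonneg <;> split_ifs <;> simp [abs_nonneg]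
    by_cases hji : j = i
    · rw [if_pos hji]
      exact Finset.sum_nonneg hnn
    · rw [if_neg hji]
      have hvne : (i : ℕ) ≠ (j : ℕ) := fun h => hji (Fin.ext h.symm)
      simp only [bandedToeplitz, Matrix.of_apply, if_neg hvne]
      split_ifs with h1 h2
      · calc |s ((i : ℕ) - (j : ℕ))|
            ≤ (if (j : ℕ) < (i : ℕ) ∧ (i : ℕ) - (j : ℕ) = ((i : ℕ) - (j : ℕ)) then
                |s ((i : ℕ) - (j : ℕ))| else 0)
              + (if (i : ℕ) < (j : ℕ) ∧ (j : ℕ) - (i : ℕ) = ((i : ℕ) - (j : ℕ)) then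
                |s ((i : ℕ) - (j : ℕ))| else 0) := by
              rw [if_pos ⟨h1.1, rfl⟩, if_neg (by omega)]; simp
          _ ≤ _ := Finset.single_le_sum hnn (Finset.mem_Icc.2 ⟨by omega, h1.2⟩)
      · calc |s ((j : ℕ) - (i : ℕ))|
            ≤ (if (j : ℕ) < (i : ℕ) ∧ (i : ℕ) - (j : ℕ) = ((j : ℕ) - (i : ℕ)) then
                |s ((j : ℕ) - (i : ℕ))| else 0)
              + (if (i : ℕ) < (j : ℕ) ∧ (j : ℕ) - (i : ℕ) = ((j : ℕ) - (i : ℕ)) then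
                |s ((j : ℕ) - (i : ℕ))| else 0) := by
              rw [if_neg (by omega), if_pos ⟨h2.1, rfl⟩]; simp
          _ ≤ _ := Finset.single_le_sum hnn (Finset.mem_Icc.2 ⟨by omega, h2.2⟩)
      · rw [abs_zero]
        exact Finset.sum_nonneg hnn
  calc ∑ j : Fin n, (if j = i then 0 else |bandedToeplitz n k s s dd i j|)
      ≤ ∑ j : Fin n, ∑ d ∈ Finset.Icc 1 k,
          ((if (j : ℕ) < (i : ℕ) ∧ (i : ℕ) - (j : ℕ) = d then |s d| else 0)
            + (if (i : ℕ) < (j : ℕ) ∧ (j : ℕ) - (i : ℕ) = d then |s d| else 0)) :=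
        Finset.sum_le_sum fun j _ => hpt j
    _ = ∑ d ∈ Finset.Icc 1 k, ∑ j : Fin n,
          ((if (j : ℕ) < (i : ℕ) ∧ (i : ℕ) - (j : ℕ) = d then |s d| else 0)
            + (if (i : ℕ) < (j : ℕ) ∧ (j : ℕ) - (i : ℕ) = d then |s d| else 0)) :=
        Finset.sum_comm
    _ ≤ ∑ d ∈ Finset.Icc 1 k, 2 * |s d| := by
        refine Finset.sum_le_sum fun d hd => ?_
        rw [Finset.sum_add_distrib, two_mul]
        rw [Finset.mem_Icc] at hd
        gcongr
        · exact sum_indicator_le _ _ (abs_nonneg _)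
            (fun a b ha hb => Fin.ext (by omega))
        · exact sum_indicator_le _ _ (abs_nonneg _)
            (fun a b ha hb => Fin.ext (by omega))

lemma banded_posSemidef (n k : ℕ) (s : ℕ → ℝ) (dd : ℝ)
    (hdom : ∑ d ∈ Finset.Icc 1 k, 2 * |s d| ≤ dd) :
    (bandedToeplitz n k s s dd).PosSemidef := by
  set A := bandedToeplitz n k s s dd with hA
  set B := ∑ d ∈ Finset.Icc 1 k, 2 * |s d| with hB
  have hB0 : (0:ℝ) ≤ B := Finset.sum_nonneg fun d _ => by positivity
  refine Matrix.posSemidef_iff_dotProduct_mulVec.2 ⟨banded_isHermitian n k s dd, fun x => ?_⟩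
  have hQ : dotProduct (star x) (A.mulVec x) = ∑ i, ∑ j, x i * (A i j * x j) := by
    simp [dotProduct, Matrix.mulVec, Finset.mul_sum]
  rw [hQ]
  have step : ∀ i j : Fin n,
      (if j = i then dd * x i ^ 2 else 0)
        - ((if j = i then 0 else |A i j|) * x i ^ 2 / 2
          + (if j = i then 0 else |A i j|) * x j ^ 2 / 2)
        ≤ x i * (A i j * x j) := by
    intro i j
    by_cases h : j = i
    · subst h
      have hAd : A j j = dd := by simp [hA, bandedToeplitz]
      have e1 : (if j = j then dd * x j ^ 2 else 0) = dd * x j ^ 2 := if_pos rfl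
      have e2 : (if j = j then (0:ℝ) else |A j j|) = 0 := if_pos rfl
      rw [e1, e2, hAd]
      exact le_of_eq (by ring)
    · simp only [if_neg h]
      have h1 : (0:ℝ) ≤ (|A i j| + A i j) * (x i + x j)^2 :=
        mul_nonneg (by linarith [neg_abs_le (A i j)]) (sq_nonneg _)
      have h2 : (0:ℝ) ≤ (|A i j| - A i j) * (x i - x j)^2 :=
        mul_nonneg (by linarith [le_abs_self (A i j)]) (sq_nonneg _)
      nlinarith [h1, h2]
  have hmain : ∑ i, ∑ j, ((if j = i then dd * x i ^ 2 else 0)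
        - ((if j = i then 0 else |A i j|) * x i ^ 2 / 2
          + (if j = i then 0 else |A i j|) * x j ^ 2 / 2))
      ≤ ∑ i, ∑ j, x i * (A i j * x j) :=
    Finset.sum_le_sum fun i _ => Finset.sum_le_sum fun j _ => step i j
  refine le_trans ?_ hmain
  -- split the sums
  have hsplit : ∑ i, ∑ j, ((if j = i then dd * x i ^ 2 else 0)
        - ((if j = i then 0 else |A i j|) * x i ^ 2 / 2
          + (if j = i then 0 else |A i j|) * x j ^ 2 / 2))
      = (∑ i : Fin n, dd * x i ^ 2)
        - ((∑ i : Fin n, ∑ j : Fin n, (if j = i then 0 else |A i j|) * x i ^ 2 / 2)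
          + (∑ i : Fin n, ∑ j : Fin n, (if j = i then 0 else |A i j|) * x j ^ 2 / 2)) := by
    simp_rw [Finset.sum_sub_distrib, Finset.sum_add_distrib]
    congr 1
    refine Finset.sum_congr rfl fun i _ => ?_
    rw [Finset.sum_ite_eq' Finset.univ i (fun _ => dd * x i ^ 2),
      if_pos (Finset.mem_univ i)]
  rw [hsplit]
  have hT2 : ∑ i : Fin n, ∑ j : Fin n, (if j = i then 0 else |A i j|) * x i ^ 2 / 2
      ≤ ∑ i : Fin n, B * (x i ^ 2 / 2) := by
    refine Finset.sum_le_sum fun i _ => ?_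
    have : ∑ j : Fin n, (if j = i then 0 else |A i j|) * x i ^ 2 / 2
        = (∑ j : Fin n, (if j = i then 0 else |A i j|)) * (x i ^ 2 / 2) := by
      rw [Finset.sum_mul]
      refine Finset.sum_congr rfl fun j _ => by ring
    rw [this]
    exact mul_le_mul_of_nonneg_right (banded_rowsum n k s dd i) (by positivity)
  have hT3 : ∑ i : Fin n, ∑ j : Fin n, (if j = i then 0 else |A i j|) * x j ^ 2 / 2
      ≤ ∑ j : Fin n, B * (x j ^ 2 / 2) := by
    rw [Finset.sum_comm]
    refine Finset.sum_le_sum fun j _ => ?_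
    have heq : ∑ i : Fin n, (if j = i then 0 else |A i j|) * x j ^ 2 / 2
        = (∑ i : Fin n, (if i = j then 0 else |A j i|)) * (x j ^ 2 / 2) := by
      rw [Finset.sum_mul]
      refine Finset.sum_congr rfl fun i _ => ?_
      simp only [hA]
      rw [banded_symm n k s dd j i]
      by_cases h : i = j
      · rw [if_pos h, if_pos h.symm]; ring
      · rw [if_neg h, if_neg (fun h' : j = i => h h'.symm)]; ring
    rw [heq]
    exact mul_le_mul_of_nonneg_right (banded_rowsum n k s dd j) (by positivity)
  have hsum2 : ∑ i : Fin n, B * (x i ^ 2 / 2) = B / 2 * ∑ i : Fin n, x i ^ 2 := by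
    rw [Finset.mul_sum]
    exact Finset.sum_congr rfl fun i _ => by ring
  have hx2 : (0:ℝ) ≤ ∑ i : Fin n, x i ^ 2 :=
    Finset.sum_nonneg fun i _ => sq_nonneg _
  have hdd : ∑ i : Fin n, dd * x i ^ 2 = dd * ∑ i : Fin n, x i ^ 2 := by
    rw [Finset.mul_sum]
  nlinarith [hT2, hT3, hsum2, hdd, mul_le_mul_of_nonneg_right hdom hx2]

/-- for `δ > 0`, an upper bound on the squared banded-Toeplitz
structured Frobenius distance from `T = (n;k;σ,δ,τ)` to the symmetric positive
semidefinite (2k+1)-banded Toeplitz matrices. -/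
theorem structured_dist_upper_bound_pos_delta {n k : ℕ} (hk : k ≤ n)
    (σ τ : ℕ → ℝ) (δ : ℝ) (hδ : 0 < δ) :
    sInf {d : ℝ | ∃ s t : ℕ → ℝ, ∃ dd : ℝ,
        (bandedToeplitz n k s t dd).PosSemidef ∧
        d = frobSq (bandedToeplitz n k σ τ δ - bandedToeplitz n k s t dd)} ≤
      min (∑ i ∈ Finset.Icc 1 k, ((n : ℝ) - i) * ((σ i)^2 + (τ i)^2))
        ((n : ℝ) * (max 0 ((∑ i ∈ Finset.Icc 1 k, |σ i + τ i|) - δ))^2 +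
          ∑ i ∈ Finset.Icc 1 k, (((n : ℝ) - i)/2) * (σ i - τ i)^2) := by
  have hbdd : BddBelow {d : ℝ | ∃ s t : ℕ → ℝ, ∃ dd : ℝ,
      (bandedToeplitz n k s t dd).PosSemidef ∧
      d = frobSq (bandedToeplitz n k σ τ δ - bandedToeplitz n k s t dd)} := by
    refine ⟨0, fun d hd => ?_⟩
    obtain ⟨s, t, dd, _, rfl⟩ := hd
    exact frobSq_nonneg _
  refine le_min (csInf_le hbdd ?_) (csInf_le hbdd ?_)
  · refine ⟨fun _ => 0, fun _ => 0, δ, banded_posSemidef n k (fun _ => 0) δ (by simp [hδ.le]), ?_⟩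
    rw [banded_sub, frobSq_banded n k hk _ _ _]
    rw [sub_self δ]
    norm_num
  · set γ : ℝ := max 0 ((∑ i ∈ Finset.Icc 1 k, |σ i + τ i|) - δ) with hγ
    refine ⟨fun d => (σ d + τ d)/2, fun d => (σ d + τ d)/2, δ + γ,
      banded_posSemidef n k _ _ ?_, ?_⟩
    · have h1 : ∑ d ∈ Finset.Icc 1 k, 2 * |(σ d + τ d)/2|
          = ∑ d ∈ Finset.Icc 1 k, |σ d + τ d| := by
        refine Finset.sum_congr rfl fun d _ => ?_
        rw [abs_div]
        simp [abs_of_nonneg]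
        ring
      rw [h1]
      have := le_max_right (0:ℝ) ((∑ i ∈ Finset.Icc 1 k, |σ i + τ i|) - δ)
      rw [← hγ] at this
      linarith
    · rw [banded_sub, frobSq_banded n k hk _ _ _]
      have hdiag : (δ - (δ + γ))^2 = γ^2 := by ring
      rw [hdiag]
      congr 1
      refine Finset.sum_congr rfl fun d _ => ?_
      ring
end

section
/- For the tridiagonal Toeplitz matrix T = (n;1;σ₁,0,τ₁) with zero diagonal, the squared 3-banded Toeplitz structured Frobenius distance Δ_F⁺(T)² to the set of symmetric positive semidefinite tridiagonal Toeplitz matrices satisfies ((n−1)/4)(3σ₁² + 3τ₁² − 2σ₁τ₁) ≤ Δ_F⁺(T)² ≤ (n−1)(σ₁² + τ₁²). -/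
open Matrix Real Finset

lemma triToeplitz_sub (n : ℕ) (σ s e τ t : ℝ) :
    triToeplitz n σ 0 τ - triToeplitz n s e t = triToeplitz n (σ - s) (-e) (τ - t) := by
  ext i j
  simp only [triToeplitz, bandedToeplitz, Matrix.sub_apply, Matrix.of_apply]
  split_ifs <;> ring

lemma count_aux (n : ℕ) (x : ℝ) :
    ∑ j ∈ Finset.range n, (if j + 1 < n then x else 0) = (n - 1 : ℕ) * x := by
  have h : (Finset.range n).filter (fun j => j + 1 < n) = Finset.range (n - 1) := by
    ext j; simp [Finset.mem_filter]; omega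
  rw [← Finset.sum_filter, h, Finset.sum_const, Finset.card_range, nsmul_eq_mul]

lemma frobSq_triToeplitz (n : ℕ) (a c b : ℝ) :
    frobSq (triToeplitz n a c b) = n * c^2 + (n - 1 : ℕ) * (a^2 + b^2) := by
  have key : ∀ i j : Fin n, (triToeplitz n a c b i j)^2 =
      (if (i:ℕ) = (j:ℕ) then c^2 else 0) + ((if (i:ℕ) = (j:ℕ)+1 then a^2 else 0)
        + (if (j:ℕ) = (i:ℕ)+1 then b^2 else 0)) := by
    intro i j
    simp only [triToeplitz, bandedToeplitz, Matrix.of_apply]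
    split_ifs <;> first | (exfalso; omega) | ring
  have conv2 : ∀ F : ℕ → ℕ → ℝ, ∑ i : Fin n, ∑ j : Fin n, F (i:ℕ) (j:ℕ)
      = ∑ i ∈ Finset.range n, ∑ j ∈ Finset.range n, F i j := by
    intro F
    rw [← Fin.sum_univ_eq_sum_range (fun i => ∑ j ∈ Finset.range n, F i j)]
    exact Finset.sum_congr rfl fun i _ => Fin.sum_univ_eq_sum_range (F i) n
  unfold frobSq
  calc ∑ i : Fin n, ∑ j : Fin n, (triToeplitz n a c b i j)^2
      = ∑ i ∈ Finset.range n, ∑ j ∈ Finset.range n,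
          ((if i = j then c^2 else 0) + ((if i = j+1 then a^2 else 0)
            + (if j = i+1 then b^2 else 0))) := by
        rw [← conv2 (fun i j => (if i = j then c^2 else 0) + ((if i = j+1 then a^2 else 0)
            + (if j = i+1 then b^2 else 0)))]
        exact Finset.sum_congr rfl fun i _ => Finset.sum_congr rfl fun j _ => key i j
    _ = n * c^2 + (n - 1 : ℕ) * (a^2 + b^2) := by
        simp only [Finset.sum_add_distrib]
        have h1 : ∑ i ∈ Finset.range n, ∑ j ∈ Finset.range n, (if i = j then c^2 else 0)
            = n * c^2 := by
          have : ∀ i ∈ Finset.range n, (∑ j ∈ Finset.range n, (if i = j then c^2 else 0)) = c^2 := by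
            intro i hi
            rw [Finset.sum_ite_eq (Finset.range n) i (fun _ => c^2), if_pos hi]
          rw [Finset.sum_congr rfl this, Finset.sum_const, Finset.card_range, nsmul_eq_mul]
        have h2 : ∑ i ∈ Finset.range n, ∑ j ∈ Finset.range n, (if i = j+1 then a^2 else 0)
            = (n-1:ℕ) * a^2 := by
          rw [Finset.sum_comm]
          have : ∀ j ∈ Finset.range n, (∑ i ∈ Finset.range n, (if i = j+1 then a^2 else 0))
              = (if j+1 < n then a^2 else 0) := by
            intro j hj
            rw [Finset.sum_ite_eq' (Finset.range n) (j+1) (fun _ => a^2)]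
            simp [Finset.mem_range]
          rw [Finset.sum_congr rfl this, count_aux]
        have h3 : ∑ i ∈ Finset.range n, ∑ j ∈ Finset.range n, (if j = i+1 then b^2 else 0)
            = (n-1:ℕ) * b^2 := by
          have : ∀ i ∈ Finset.range n, (∑ j ∈ Finset.range n, (if j = i+1 then b^2 else 0))
              = (if i+1 < n then b^2 else 0) := by
            intro i hi
            rw [Finset.sum_ite_eq' (Finset.range n) (i+1) (fun _ => b^2)]
            simp [Finset.mem_range]
          rw [Finset.sum_congr rfl this, count_aux]
        rw [h1, h2, h3]; ring

lemma psd_cons2 {n : ℕ} (hn : 2 ≤ n) {s e t : ℝ}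
    (h : (triToeplitz n s e t).PosSemidef) : t = s ∧ s^2 ≤ e^2 := by
  set f : Fin 2 → Fin n := fun k => ⟨k.val, by omega⟩ with hf
  have hB : (triToeplitz n s e t).submatrix f f = !![e, t; s, e] := by
    ext i j
    fin_cases i <;> fin_cases j <;>
      simp [triToeplitz, bandedToeplitz, Matrix.submatrix_apply, hf]
  have hBpsd := h.submatrix f
  rw [hB] at hBpsd
  have hherm := hBpsd.1
  have hts : t = s := by
    have := congrFun (congrFun hherm 0) 1
    simpa [Matrix.conjTranspose_apply] using this.symm
  have h1 := hBpsd.dotProduct_mulVec_nonneg ![1, -1]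
  have h2 := hBpsd.dotProduct_mulVec_nonneg ![1, 1]
  simp [dotProduct, Matrix.mulVec, Fin.sum_univ_two] at h1 h2
  constructor
  · exact hts
  · nlinarith [h1, h2, hts]

lemma psd_cons3 {n : ℕ} (hn : 3 ≤ n) {s e t : ℝ}
    (h : (triToeplitz n s e t).PosSemidef) : 2*s^2 ≤ e^2 := by
  have hts : t = s := (psd_cons2 (by omega) h).1
  set f : Fin 3 → Fin n := fun k => ⟨k.val, by omega⟩ with hf
  have hB : (triToeplitz n s e t).submatrix f f = !![e, t, 0; s, e, t; 0, s, e] := by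
    ext i j
    fin_cases i <;> fin_cases j <;>
      simp [triToeplitz, bandedToeplitz, Matrix.submatrix_apply, hf]
  have hBpsd := h.submatrix f
  rw [hB] at hBpsd
  have h1 := hBpsd.dotProduct_mulVec_nonneg ![1, -Real.sqrt 2, 1]
  have h2 := hBpsd.dotProduct_mulVec_nonneg ![1, Real.sqrt 2, 1]
  simp [dotProduct, Matrix.mulVec, Fin.sum_univ_three] at h1 h2
  have hsq : Real.sqrt 2 ^ 2 = 2 := Real.sq_sqrt (by norm_num)
  subst hts
  have hp : 0 ≤ (4*e - 4*(Real.sqrt 2)*t) * (4*e + 4*(Real.sqrt 2)*t) :=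
    mul_nonneg (by nlinarith [h1]) (by nlinarith [h2])
  have ht2 : (Real.sqrt 2)^2 * t^2 = 2 * t^2 := by rw [hsq]
  nlinarith [hp, ht2]

/-- for `T = (n;1;σ₁,0,τ₁)`, the squared tridiagonal-Toeplitz
structured Frobenius distance to the symmetric positive semidefinite tridiagonal
Toeplitz matrices satisfies
`((n−1)/4)(3σ₁² + 3τ₁² − 2σ₁τ₁) ≤ Δ_F⁺(T)² ≤ (n−1)(σ₁² + τ₁²)`. -/
theorem tridiag_structured_dist_bounds {n : ℕ} (hn : 2 ≤ n) (σ₁ τ₁ : ℝ) :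
    (((n : ℝ) - 1)/4) * (3*σ₁^2 + 3*τ₁^2 - 2*σ₁*τ₁) ≤
      sInf {d : ℝ | ∃ s t e : ℝ, (triToeplitz n s e t).PosSemidef ∧
        d = frobSq (triToeplitz n σ₁ 0 τ₁ - triToeplitz n s e t)} ∧
    sInf {d : ℝ | ∃ s t e : ℝ, (triToeplitz n s e t).PosSemidef ∧
        d = frobSq (triToeplitz n σ₁ 0 τ₁ - triToeplitz n s e t)} ≤
      ((n : ℝ) - 1) * (σ₁^2 + τ₁^2) := by
  have hcast : ((n - 1 : ℕ) : ℝ) = (n : ℝ) - 1 := by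
    have : 1 ≤ n := by omega
    push_cast [this]; ring
  have hzero : triToeplitz n 0 0 0 = 0 := by
    ext i j
    simp only [triToeplitz, bandedToeplitz, Matrix.of_apply, Matrix.zero_apply]
    split_ifs <;> rfl
  have hzpsd : (triToeplitz n 0 0 0).PosSemidef := by
    rw [hzero]; exact Matrix.PosSemidef.zero
  have hval0 : frobSq (triToeplitz n σ₁ 0 τ₁ - triToeplitz n 0 0 0)
      = ((n : ℝ) - 1) * (σ₁^2 + τ₁^2) := by
    rw [triToeplitz_sub, frobSq_triToeplitz, hcast]
    ring
  have hmem : ((n : ℝ) - 1) * (σ₁^2 + τ₁^2) ∈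
      {d : ℝ | ∃ s t e : ℝ, (triToeplitz n s e t).PosSemidef ∧
        d = frobSq (triToeplitz n σ₁ 0 τ₁ - triToeplitz n s e t)} :=
    ⟨0, 0, 0, hzpsd, hval0.symm⟩
  have hlb : ∀ d ∈ {d : ℝ | ∃ s t e : ℝ, (triToeplitz n s e t).PosSemidef ∧
        d = frobSq (triToeplitz n σ₁ 0 τ₁ - triToeplitz n s e t)},
      (((n : ℝ) - 1)/4) * (3*σ₁^2 + 3*τ₁^2 - 2*σ₁*τ₁) ≤ d := by
    rintro d ⟨s, t, e, hpsd, rfl⟩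
    obtain ⟨hts, hse⟩ := psd_cons2 hn hpsd
    subst hts
    rw [triToeplitz_sub, frobSq_triToeplitz, hcast]
    have core : (3*σ₁^2 + 3*τ₁^2 - 2*σ₁*τ₁)/4 ≤ 2*t^2 + ((σ₁-t)^2 + (τ₁-t)^2) := by
      nlinarith [sq_nonneg (4*t - (σ₁+τ₁))]
    rcases eq_or_lt_of_le hn with h2 | h3
    · -- n = 2
      rw [← h2]
      push_cast
      nlinarith [core, hse]
    · -- n ≥ 3
      have h2t : 2*t^2 ≤ e^2 := psd_cons3 (by omega) hpsd
      have hN : (3 : ℝ) ≤ (n : ℝ) := by exact_mod_cast h3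
      have core2 : (3*σ₁^2 + 3*τ₁^2 - 2*σ₁*τ₁)/4 ≤ e^2 + ((σ₁-t)^2 + (τ₁-t)^2) := by
        linarith
      have h7 := mul_le_mul_of_nonneg_left core2 (show (0:ℝ) ≤ (n:ℝ) - 1 by linarith)
      nlinarith [h7, sq_nonneg e]
  constructor
  · exact le_csInf ⟨_, hmem⟩ hlb
  · refine csInf_le ⟨(((n : ℝ) - 1)/4) * (3*σ₁^2 + 3*τ₁^2 - 2*σ₁*τ₁), hlb⟩ hmem
end
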